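/- Let a > 0 and let V ∈ ℝ[[X]] be a formal power series whose coefficients in degrees 0, 1 and 2 vanish. Define U ∈ ℝ[[X]] by [X^m]U := [X^{m+2}]V (so U represents V/X² and has zero constant coefficient), and let B ∈ ℝ[[T]] be the binomial series of (1−T)^{−1/2}, namely B := Σ_{j≥0} ((2j−1)!!/(2^j j!)) T^j. Then for every n ∈ ℕ, Σ_{k=0}^{2n} a^k ((2(n+k)−1)!!/k!) · [X^{2(n+k)}](V^k) = (2n−1)!! · [X^{2n}]( (B(2a·U))^{2n+1} ), where B(2a·U) denotes the substitution of the series 2a·U (which has zero constant coefficient) into B. Equivalently, the n-th coefficient of the formal integral F[−X²/(2a)+V] equals (2n−1)!! [X^{2n}] (X/√(−2S(X)))^{2n+1}, where the square root is the branch whose expansion has positive leading coefficient. -/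

import Mathlib

/-- Composition (substitution) of formal power series: `substPS g f` is `f(g)`,
the usual composition when `g` has zero constant coefficient. -/
noncomputable def substPS (g f : PowerSeries ℝ) : PowerSeries ℝ :=
  PowerSeries.mk fun n => ∑ k ∈ Finset.range (n + 1),
    PowerSeries.coeff k f * PowerSeries.coeff n (g ^ k)

/-- `dfac m` is the odd double factorial `(2m-1)!! = (2m)!/(2^m m!)` as a real number. -/
noncomputable def dfac (m : ℕ) : ℝ := ((2 * m).factorial : ℝ) / (2 ^ m * (m.factorial : ℝ))

open PowerSeries Finset


lemma dfac_pos (m : ℕ) : 0 < dfac m := by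
  unfold dfac
  positivity

lemma dfac_succ (m : ℕ) : dfac (m + 1) = (2 * m + 1) * dfac m := by
  unfold dfac
  have h1 : 2 * (m + 1) = (2 * m + 1) + 1 := by ring
  rw [h1, Nat.factorial_succ, Nat.factorial_succ, Nat.factorial_succ]
  have h2 : (m.factorial : ℝ) ≠ 0 := by positivity
  push_cast
  field_simp
  ring

/-- The binomial series `(1-T)^{-1/2}`. -/
noncomputable def Bser : PowerSeries ℝ :=
  PowerSeries.mk fun j => dfac j / (2 ^ j * (j.factorial : ℝ))

lemma Bode : 2 • ((1 - X) * d⁄dX ℝ Bser) = Bser := by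
  ext m
  rw [map_nsmul, sub_mul, one_mul, map_sub]
  rcases m with _ | m
  · simp [Bser, coeff_derivative, PowerSeries.coeff_mul, dfac, Nat.factorial]
  · rw [coeff_succ_X_mul, coeff_derivative, coeff_derivative]
    simp only [Bser, coeff_mk, smul_eq_mul]
    simp only [dfac_succ]
    rw [nsmul_eq_mul]
    have h2 : (m.factorial : ℝ) ≠ 0 := by positivity
    have h3 : dfac m ≠ 0 := ne_of_gt (dfac_pos m)
    rw [Nat.factorial_succ, Nat.factorial_succ]
    push_cast
    field_simp
    ring


lemma BodePow (p : ℕ) :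
    2 • ((1 - X) * d⁄dX ℝ (Bser ^ p)) = (p : ℝ) • Bser ^ p := by
  induction p with
  | zero => simp
  | succ p ih =>
    have hd : d⁄dX ℝ (Bser ^ (p + 1)) =
        (d⁄dX ℝ (Bser ^ p)) * Bser + Bser ^ p * d⁄dX ℝ Bser := by
      rw [pow_succ]
      rw [Derivation.leibniz]
      simp only [smul_eq_mul]
      ring
    rw [hd]
    have h1 : 2 • ((1 - X) * ((d⁄dX ℝ (Bser ^ p)) * Bser + Bser ^ p * d⁄dX ℝ Bser))
        = (2 • ((1 - X) * d⁄dX ℝ (Bser ^ p))) * Bser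
          + Bser ^ p * (2 • ((1 - X) * d⁄dX ℝ Bser)) := by
      simp only [smul_eq_mul, nsmul_eq_mul]
      push_cast
      ring
    rw [h1, ih, Bode, pow_succ]
    simp only [PowerSeries.smul_eq_C_mul, Nat.cast_add, Nat.cast_one, map_add, map_one]
    ring

noncomputable def eCoe (p m : ℕ) : ℝ :=
  (∏ i ∈ Finset.range m, ((p : ℝ) + 2 * i)) / (2 ^ m * (m.factorial : ℝ))

lemma coeff_X_mul_derivative (f : PowerSeries ℝ) (m : ℕ) :
    coeff m (X * d⁄dX ℝ f) = m * coeff m f := by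
  cases m with
  | zero =>
    rw [PowerSeries.coeff_zero_eq_constantCoeff, map_mul]
    simp
  | succ m => rw [coeff_succ_X_mul, coeff_derivative]; push_cast; ring

lemma coeff_B_pow (p m : ℕ) : coeff m (Bser ^ p) = eCoe p m := by
  induction m with
  | zero =>
    rw [PowerSeries.coeff_zero_eq_constantCoeff, map_pow]
    have hc : constantCoeff Bser = 1 := by
      simp [Bser, dfac, ← PowerSeries.coeff_zero_eq_constantCoeff]
    rw [hc]; simp [eCoe]
  | succ m ih =>
    have h := congrArg (coeff m) (BodePow p)
    rw [map_nsmul, map_smul, sub_mul, one_mul, map_sub, coeff_X_mul_derivative,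
      coeff_derivative, ih] at h
    have h2 : (coeff (m+1)) (Bser ^ p) =
        ((p:ℝ) + 2 * m) * eCoe p m / (2 * (m + 1)) := by
      rw [nsmul_eq_mul, smul_eq_mul] at h
      have hm1 : ((m:ℝ) + 1) ≠ 0 := by positivity
      field_simp at h ⊢
      push_cast at h
      linarith [h]
    rw [h2]
    unfold eCoe
    rw [Finset.prod_range_succ, pow_succ, Nat.factorial_succ]
    have h2 : (m.factorial : ℝ) ≠ 0 := by positivity
    push_cast
    field_simp

lemma eCoe_odd (n k : ℕ) :
    eCoe (2 * n + 1) k = dfac (n + k) / (dfac n * 2 ^ k * (k.factorial : ℝ)) := by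
  have key : ∀ k, (∏ i ∈ Finset.range k, ((2 * n + 1 : ℕ) + 2 * (i:ℝ))) * dfac n
      = dfac (n + k) := by
    intro k
    induction k with
    | zero => simp
    | succ k ih =>
      rw [Finset.prod_range_succ, show n + (k+1) = (n+k)+1 from rfl, dfac_succ, ← ih]
      push_cast
      ring
  unfold eCoe
  rw [← key k]
  have := dfac_pos n
  field_simp

lemma eCoe_explicit (p m : ℕ) : eCoe p m =
    (∏ i ∈ Finset.range m, ((p : ℝ) + 2 * i)) / (2 ^ m * (m.factorial : ℝ)) := rfl

lemma coeff_pow_zero_of_lt {W : PowerSeries ℝ} (hW : constantCoeff W = 0)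
    {k m : ℕ} (h : m < k) : coeff m (W ^ k) = 0 := by
  obtain ⟨r, hr⟩ := pow_dvd_pow_of_dvd (PowerSeries.X_dvd_iff.mpr hW) k
  rw [hr, PowerSeries.coeff_X_pow_mul', if_neg (Nat.not_le.mpr h)]

lemma coeff_mul_congr {f f' g g' : PowerSeries ℝ} {N : ℕ}
    (hf : ∀ i ≤ N, coeff i f = coeff i f')
    (hg : ∀ i ≤ N, coeff i g = coeff i g') :
    ∀ i ≤ N, coeff i (f * g) = coeff i (f' * g') := by
  intro i hi
  rw [PowerSeries.coeff_mul, PowerSeries.coeff_mul]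
  refine Finset.sum_congr rfl fun p hp => ?_
  rw [Finset.HasAntidiagonal.mem_antidiagonal] at hp
  rw [hf p.1 (by omega), hg p.2 (by omega)]

lemma coeff_pow_congr {f f' : PowerSeries ℝ} {N : ℕ}
    (hf : ∀ i ≤ N, coeff i f = coeff i f') (p : ℕ) :
    ∀ i ≤ N, coeff i (f ^ p) = coeff i (f' ^ p) := by
  induction p with
  | zero => intro i _; rfl
  | succ p ih =>
    intro i hi
    rw [pow_succ, pow_succ]
    exact coeff_mul_congr ih hf i hi

lemma coeff_aeval {W : PowerSeries ℝ} (hW : constantCoeff W = 0) (r : Polynomial ℝ)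
    (m : ℕ) : coeff m (Polynomial.aeval W r)
      = ∑ i ∈ Finset.range (m + 1), r.coeff i * coeff m (W ^ i) := by
  rw [Polynomial.aeval_eq_sum_range, map_sum]
  simp only [map_smul, smul_eq_mul]
  set M := max (r.natDegree + 1) (m + 1) with hM
  have e1 : ∑ i ∈ Finset.range (r.natDegree + 1), r.coeff i * coeff m (W ^ i)
      = ∑ i ∈ Finset.range M, r.coeff i * coeff m (W ^ i) := by
    apply Finset.sum_subset (Finset.range_subset_range.mpr (le_max_left _ _))
    intro i _ hi
    rw [Finset.mem_range, not_lt] at hi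
    rw [Polynomial.coeff_eq_zero_of_natDegree_lt (by omega), zero_mul]
  have e2 : ∑ i ∈ Finset.range (m + 1), r.coeff i * coeff m (W ^ i)
      = ∑ i ∈ Finset.range M, r.coeff i * coeff m (W ^ i) := by
    apply Finset.sum_subset (Finset.range_subset_range.mpr (le_max_right _ _))
    intro i _ hi
    rw [Finset.mem_range, not_lt] at hi
    rw [coeff_pow_zero_of_lt hW (by omega), mul_zero]
  rw [e1, e2]

lemma coeff_substPS_pow {W : PowerSeries ℝ} (hW : constantCoeff W = 0) (N p : ℕ) :
    coeff N ((substPS W Bser) ^ p)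
      = ∑ k ∈ Finset.range (N + 1), coeff k (Bser ^ p) * coeff N (W ^ k) := by
  set q : Polynomial ℝ := trunc (N + 1) Bser with hqdef
  have hq : ∀ i ≤ N, q.coeff i = coeff i Bser := by
    intro i hi
    rw [hqdef, coeff_trunc, if_pos (Nat.lt_succ_of_le hi)]
  have h1 : ∀ i ≤ N, coeff i (substPS W Bser) = coeff i (Polynomial.aeval W q) := by
    intro i hi
    rw [substPS, coeff_mk, coeff_aeval hW]
    refine Finset.sum_congr rfl fun k hk => ?_
    rw [Finset.mem_range] at hk
    rw [hq k (by omega)]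
  rw [coeff_pow_congr h1 p N le_rfl, ← map_pow, coeff_aeval hW]
  refine Finset.sum_congr rfl fun k hk => ?_
  rw [Finset.mem_range] at hk
  congr 1
  have hq' : ∀ i ≤ N, coeff i ((q : PowerSeries ℝ)) = coeff i Bser := by
    intro i hi
    rw [Polynomial.coeff_coe, hq i hi]
  have h2 := coeff_pow_congr hq' p k (by omega)
  rw [← h2, ← Polynomial.coe_pow, Polynomial.coeff_coe]

theorem stmt2 (a : ℝ) (ha : 0 < a) (V : PowerSeries ℝ)
    (hV0 : PowerSeries.coeff 0 V = 0) (hV1 : PowerSeries.coeff 1 V = 0)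
    (hV2 : PowerSeries.coeff 2 V = 0) (n : ℕ) :
    ∑ k ∈ Finset.range (2 * n + 1),
        a ^ k * (dfac (n + k) / (k.factorial : ℝ)) *
          PowerSeries.coeff (2 * (n + k)) (V ^ k)
      = dfac n * PowerSeries.coeff (2 * n)
          ((substPS ((2 * a) • PowerSeries.mk fun m => PowerSeries.coeff (m + 2) V)
              (PowerSeries.mk fun j => dfac j / (2 ^ j * (j.factorial : ℝ)))) ^ (2 * n + 1)) := by
  set U : PowerSeries ℝ := PowerSeries.mk fun m => PowerSeries.coeff (m + 2) V with hU
  set W : PowerSeries ℝ := (2 * a) • U with hWdef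
  have hW : constantCoeff W = 0 := by
    rw [hWdef, ← PowerSeries.coeff_zero_eq_constantCoeff, map_smul, smul_eq_mul, hU,
      coeff_mk, hV2, mul_zero]
  have hB : (PowerSeries.mk fun j => dfac j / (2 ^ j * (j.factorial : ℝ))) = Bser := rfl
  rw [hB, coeff_substPS_pow hW, Finset.mul_sum]
  refine Finset.sum_congr rfl fun k hk => ?_
  -- individual coefficient manipulations
  have hVX : V = X ^ 2 * U := by
    ext m
    rw [PowerSeries.coeff_X_pow_mul']
    rcases Nat.lt_or_ge m 2 with h | h
    · rw [if_neg (by omega)]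
      interval_cases m
      · exact hV0
      · exact hV1
    · rw [if_pos h, hU, coeff_mk, Nat.sub_add_cancel h]
  have hUk : PowerSeries.coeff (2 * (n + k)) (V ^ k) = coeff (2 * n) (U ^ k) := by
    conv_lhs => rw [hVX]
    rw [mul_pow, ← pow_mul, show 2 * (n + k) = 2 * n + 2 * k by ring,
      PowerSeries.coeff_X_pow_mul]
  have hWk : coeff (2 * n) (W ^ k) = (2 * a) ^ k * coeff (2 * n) (U ^ k) := by
    rw [hWdef, smul_pow, map_smul, smul_eq_mul]
  -- coefficient of B^(2n+1)
  have key : ∀ j, (∏ i ∈ Finset.range j, ((2 * n + 1 : ℕ) + 2 * (i : ℝ))) * dfac n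
      = dfac (n + j) := by
    intro j
    induction j with
    | zero => simp
    | succ j ih =>
      rw [Finset.prod_range_succ, show n + (j + 1) = (n + j) + 1 from rfl, dfac_succ, ← ih]
      push_cast
      ring
  rw [coeff_B_pow, eCoe_explicit, hWk, ← hUk, ← key k]
  have h1 : dfac n ≠ 0 := ne_of_gt (dfac_pos n)
  have h2 : (k.factorial : ℝ) ≠ 0 := by positivity
  have h3 : (2 : ℝ) ^ k ≠ 0 := by positivity
  rw [mul_pow]
  field_simp
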